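/- arXiv:2105.14635 — 3 statements merged into one kernel-verified Lean document; each statement's English description precedes it below -/
import Mathlib

section
/- Let G = (V,E) be a finite simple graph with Laplacian L = D - A, and let φ, ψ : V → ℝ satisfy ⟨φ, (D+A)φ⟩ ≤ ε‖φ‖²_{ℓ²} and ⟨ψ, (D+A)ψ⟩ ≤ ε‖ψ‖²_{ℓ²} for some ε ≥ 0. Then the pointwise product φ·ψ satisfies ⟨φ·ψ, L(φ·ψ)⟩ ≤ 2ε(‖φ‖²_{ℓ^∞}‖ψ‖²_{ℓ²} + ‖φ‖²_{ℓ²}‖ψ‖²_{ℓ^∞}). -/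
open Matrix Finset

lemma signless_quad {V : Type*} [Fintype V] [DecidableEq V]
    (G : SimpleGraph V) [DecidableRel G.Adj] (x : V → ℝ) :
    x ⬝ᵥ ((G.degMatrix ℝ + G.adjMatrix ℝ) *ᵥ x) =
      (∑ i : V, ∑ j : V, if G.Adj i j then (x i + x j)^2 else 0) / 2 := by
  simp_rw [add_mulVec, dotProduct_add, SimpleGraph.dotProduct_mulVec_degMatrix,
    SimpleGraph.dotProduct_mulVec_adjMatrix, ← sum_add_distrib,
    SimpleGraph.degree_eq_sum_if_adj, sum_mul, ite_mul, one_mul,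
    zero_mul, ← sum_add_distrib, ite_add_ite, add_zero]
  rw [← add_self_div_two (∑ i : V, ∑ j : V, _)]
  conv_lhs => enter [1,2,2,i,2,j]; rw [if_congr (SimpleGraph.adj_comm G i j) rfl rfl]
  conv_lhs => enter [1,2]; rw [Finset.sum_comm]
  simp_rw [← sum_add_distrib, ite_add_ite]
  congr 2 with i
  congr 2 with j
  ring_nf

theorem product_dirichlet_energy_bound
    {V : Type*} [Fintype V] [DecidableEq V] [Nonempty V]
    (G : SimpleGraph V) [DecidableRel G.Adj]
    (φ ψ : V → ℝ) (ε : ℝ) (hε : 0 ≤ ε)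
    (hφ : φ ⬝ᵥ ((G.degMatrix ℝ + G.adjMatrix ℝ) *ᵥ φ) ≤ ε * ∑ v, φ v ^ 2)
    (hψ : ψ ⬝ᵥ ((G.degMatrix ℝ + G.adjMatrix ℝ) *ᵥ ψ) ≤ ε * ∑ v, ψ v ^ 2) :
    (fun v => φ v * ψ v) ⬝ᵥ (G.lapMatrix ℝ *ᵥ fun v => φ v * ψ v)
      ≤ 2 * ε * ((⨆ v, |φ v|) ^ 2 * ∑ v, ψ v ^ 2
          + (∑ v, φ v ^ 2) * (⨆ v, |ψ v|) ^ 2) := by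
  set Mφ : ℝ := ⨆ v, |φ v| with hMφ
  set Mψ : ℝ := ⨆ v, |ψ v| with hMψ
  have hMφ0 : 0 ≤ Mφ := Real.iSup_nonneg fun v => abs_nonneg _
  have hMψ0 : 0 ≤ Mψ := Real.iSup_nonneg fun v => abs_nonneg _
  have hbφ : ∀ v, |φ v| ≤ Mφ := fun v =>
    le_ciSup (f := fun v => |φ v|) (Set.Finite.bddAbove (Set.finite_range _)) v
  have hbψ : ∀ v, |ψ v| ≤ Mψ := fun v =>
    le_ciSup (f := fun v => |ψ v|) (Set.Finite.bddAbove (Set.finite_range _)) v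
  have hlap : (fun v => φ v * ψ v) ⬝ᵥ (G.lapMatrix ℝ *ᵥ fun v => φ v * ψ v)
      = (∑ i : V, ∑ j : V, if G.Adj i j then (φ i * ψ i - φ j * ψ j)^2 else 0) / 2 := by
    rw [← toLinearMap₂'_apply', SimpleGraph.lapMatrix_toLinearMap₂']
  have key : (∑ i : V, ∑ j : V, if G.Adj i j then (φ i * ψ i - φ j * ψ j)^2 else 0)
      ≤ 2*Mψ^2 * (∑ i : V, ∑ j : V, if G.Adj i j then (φ i + φ j)^2 else 0)
        + 2*Mφ^2 * (∑ i : V, ∑ j : V, if G.Adj i j then (ψ i + ψ j)^2 else 0) := by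
    rw [mul_sum, mul_sum, ← sum_add_distrib]
    refine sum_le_sum fun i _ => ?_
    rw [mul_sum, mul_sum, ← sum_add_distrib]
    refine sum_le_sum fun j _ => ?_
    by_cases h : G.Adj i j
    · simp only [if_pos h]
      have h1 : (ψ i - ψ j)^2 ≤ 4*Mψ^2 := by
        nlinarith [sq_abs (ψ i), sq_abs (ψ j), hbψ i, hbψ j, abs_nonneg (ψ i),
          abs_nonneg (ψ j), neg_abs_le (ψ i * ψ j), abs_mul (ψ i) (ψ j),
          mul_le_mul (hbψ i) (hbψ j) (abs_nonneg _) hMψ0]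
      have h2 : (φ i - φ j)^2 ≤ 4*Mφ^2 := by
        nlinarith [sq_abs (φ i), sq_abs (φ j), hbφ i, hbφ j, abs_nonneg (φ i),
          abs_nonneg (φ j), neg_abs_le (φ i * φ j), abs_mul (φ i) (φ j),
          mul_le_mul (hbφ i) (hbφ j) (abs_nonneg _) hMφ0]
      nlinarith [sq_nonneg ((φ i + φ j)*(ψ i - ψ j) - (φ i - φ j)*(ψ i + ψ j)),
        mul_le_mul_of_nonneg_left h1 (sq_nonneg (φ i + φ j)),
        mul_le_mul_of_nonneg_left h2 (sq_nonneg (ψ i + ψ j))]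
    · simp [h]
  have qφ := signless_quad G φ
  have qψ := signless_quad G ψ
  rw [hlap]
  have h3 : (∑ i : V, ∑ j : V, if G.Adj i j then (φ i * ψ i - φ j * ψ j)^2 else 0) / 2
      ≤ 2*Mψ^2 * (φ ⬝ᵥ ((G.degMatrix ℝ + G.adjMatrix ℝ) *ᵥ φ))
        + 2*Mφ^2 * (ψ ⬝ᵥ ((G.degMatrix ℝ + G.adjMatrix ℝ) *ᵥ ψ)) := by
    rw [qφ, qψ]; linarith
  have h4 : 2*Mψ^2 * (φ ⬝ᵥ ((G.degMatrix ℝ + G.adjMatrix ℝ) *ᵥ φ))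
        ≤ 2*Mψ^2 * (ε * ∑ v, φ v ^ 2) := by
    apply mul_le_mul_of_nonneg_left hφ; positivity
  have h5 : 2*Mφ^2 * (ψ ⬝ᵥ ((G.degMatrix ℝ + G.adjMatrix ℝ) *ᵥ ψ))
        ≤ 2*Mφ^2 * (ε * ∑ v, ψ v ^ 2) := by
    apply mul_le_mul_of_nonneg_left hψ; positivity
  nlinarith [h3, h4, h5]
end

section
/- Let G be a d-regular finite simple graph and φ: V → ℝ satisfy (d·Id + A)φ = εφ with 0 ≤ ε < d. Let m be a vertex where |φ| attains its maximum. Then for every nonnegative integer k, ‖φ‖_{ℓ^∞} ≤ (d/(d-ε))^{2k} · (Σ_{j∈V} [(A/d)^{2k} δ_m](j)²)^{1/2} · ‖φ‖_{ℓ²}. -/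
open Matrix Finset

theorem sup_norm_bound_via_random_walk
    {V : Type*} [Fintype V] [DecidableEq V]
    (G : SimpleGraph V) [DecidableRel G.Adj] (d : ℕ)
    (hreg : G.IsRegularOfDegree d)
    (φ : V → ℝ) (ε : ℝ) (hε0 : 0 ≤ ε) (hεd : ε < d)
    (heig : ((d : ℝ) • (1 : Matrix V V ℝ) + G.adjMatrix ℝ) *ᵥ φ = ε • φ)
    (m : V) (hm : ∀ v : V, |φ v| ≤ |φ m|) (k : ℕ) :
    (⨆ v, |φ v|)
      ≤ ((d : ℝ) / ((d : ℝ) - ε)) ^ (2 * k)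
          * Real.sqrt (∑ j : V,
              (((((d : ℝ)⁻¹ • G.adjMatrix ℝ) ^ (2 * k)) *ᵥ Pi.single m 1) j) ^ 2)
          * Real.sqrt (∑ v, φ v ^ 2) := by
  have hd : (0 : ℝ) < d := lt_of_le_of_lt hε0 hεd
  set M : Matrix V V ℝ := (d : ℝ)⁻¹ • G.adjMatrix ℝ with hMdef
  -- eigenvector relation
  rw [add_mulVec, smul_mulVec, one_mulVec] at heig
  have hAφ : G.adjMatrix ℝ *ᵥ φ = (ε - d) • φ := by
    have h2 : G.adjMatrix ℝ *ᵥ φ = ε • φ - (d : ℝ) • φ := eq_sub_of_add_eq' heig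
    rw [h2, sub_smul]
  have hM : M *ᵥ φ = ((ε - d) / d) • φ := by
    rw [hMdef, smul_mulVec, hAφ, smul_smul, div_eq_inv_mul]
  have hMn : ∀ n : ℕ, M ^ n *ᵥ φ = ((ε - d) / d) ^ n • φ := by
    intro n
    induction n with
    | zero => simp
    | succ n ih =>
        rw [pow_succ, ← mulVec_mulVec, hM, mulVec_smul, ih, smul_smul, pow_succ]
        ring_nf
  have hMT : Mᵀ = M := by
    rw [hMdef, transpose_smul, Matrix.IsSymm.eq (SimpleGraph.isSymm_adjMatrix G)]
  have hEntry : ∀ j, ((M ^ (2 * k)) *ᵥ Pi.single m 1) j = (M ^ (2 * k)) m j := by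
    intro j
    have h1 : ((M ^ (2 * k)) *ᵥ Pi.single m 1) j = (M ^ (2 * k)) j m := by
      simp [mulVec, dotProduct, Pi.single_apply]
    have h2 : ((M ^ (2 * k))ᵀ) m j = (M ^ (2 * k)) j m := rfl
    rw [h1, ← h2, transpose_pow, hMT]
  set c : ℝ := (((d : ℝ) - ε) / d) ^ (2 * k) with hcdef
  have hc : 0 < c := pow_pos (div_pos (by linarith) hd) _
  -- value at m
  have hval : (M ^ (2 * k) *ᵥ φ) m = c * φ m := by
    rw [hMn (2 * k)]
    have : ((ε - d) / d) ^ (2 * k) = c := by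
      rw [hcdef]
      have : (ε - (d : ℝ)) / d = -((((d : ℝ) - ε)) / d) := by ring
      rw [this, Even.neg_pow (even_two_mul k)]
    simp [this, Pi.smul_apply, smul_eq_mul]
  -- Cauchy-Schwarz
  have hcs : |(M ^ (2 * k) *ᵥ φ) m|
      ≤ Real.sqrt (∑ j : V, ((M ^ (2 * k)) m j) ^ 2) * Real.sqrt (∑ v, φ v ^ 2) := by
    have hsum : (M ^ (2 * k) *ᵥ φ) m = ∑ j : V, (M ^ (2 * k)) m j * φ j := rfl
    rw [hsum]
    have h1 : (∑ j : V, (M ^ (2 * k)) m j * φ j) ^ 2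
        ≤ (∑ j : V, ((M ^ (2 * k)) m j) ^ 2) * (∑ v, φ v ^ 2) :=
      Finset.sum_mul_sq_le_sq_mul_sq univ _ _
    calc |∑ j : V, (M ^ (2 * k)) m j * φ j|
        = Real.sqrt ((∑ j : V, (M ^ (2 * k)) m j * φ j) ^ 2) := (Real.sqrt_sq_eq_abs _).symm
      _ ≤ Real.sqrt ((∑ j : V, ((M ^ (2 * k)) m j) ^ 2) * (∑ v, φ v ^ 2)) :=
          Real.sqrt_le_sqrt h1
      _ = Real.sqrt (∑ j : V, ((M ^ (2 * k)) m j) ^ 2) * Real.sqrt (∑ v, φ v ^ 2) :=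
          Real.sqrt_mul (Finset.sum_nonneg fun j _ => sq_nonneg _) _
  have : Nonempty V := ⟨m⟩
  have hsup : (⨆ v, |φ v|) ≤ |φ m| := ciSup_le hm
  refine le_trans hsup ?_
  have hSrw : Real.sqrt (∑ j : V, (((M ^ (2 * k)) *ᵥ Pi.single m 1) j) ^ 2)
      = Real.sqrt (∑ j : V, ((M ^ (2 * k)) m j) ^ 2) := by
    congr 1
    exact Finset.sum_congr rfl fun j _ => by rw [hEntry j]
  have hcinv : ((d : ℝ) / ((d : ℝ) - ε)) ^ (2 * k) = c⁻¹ := by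
    rw [hcdef, ← inv_pow, inv_div]
  rw [hSrw, hcinv]
  have key : c * |φ m| ≤ Real.sqrt (∑ j : V, ((M ^ (2 * k)) m j) ^ 2)
      * Real.sqrt (∑ v, φ v ^ 2) := by
    calc c * |φ m| = |c * φ m| := by rw [abs_mul, abs_of_pos hc]
      _ = |(M ^ (2 * k) *ᵥ φ) m| := by rw [hval]
      _ ≤ _ := hcs
  calc |φ m| = c⁻¹ * (c * |φ m|) := by field_simp
    _ ≤ c⁻¹ * (Real.sqrt (∑ j : V, ((M ^ (2 * k)) m j) ^ 2) * Real.sqrt (∑ v, φ v ^ 2)) :=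
        mul_le_mul_of_nonneg_left key (inv_nonneg.mpr hc.le)
    _ = _ := by ring
end

section
/- Let G be a d-regular finite simple graph with n vertices and let φ: V → ℝ satisfy (d·Id + A)φ = εφ with 0 ≤ ε < d. If for some k the random-walk matrix satisfies max_{m,j} ((A/d)^{2k})_{m,j} ≤ C/n, then ‖φ‖_{ℓ^∞} ≤ (d/(d−ε))^{2k} · (C/√n) · ‖φ‖_{ℓ²}. -/
open Matrix Finset

theorem sup_norm_bound_from_equidistributed_walk
    {V : Type*} [Fintype V] [DecidableEq V] [Nonempty V]
    (G : SimpleGraph V) [DecidableRel G.Adj] (d : ℕ)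
    (hreg : G.IsRegularOfDegree d)
    (φ : V → ℝ) (ε : ℝ) (hε0 : 0 ≤ ε) (hεd : ε < d)
    (heig : ((d : ℝ) • (1 : Matrix V V ℝ) + G.adjMatrix ℝ) *ᵥ φ = ε • φ)
    (k : ℕ) (C : ℝ) (hC : 0 < C)
    (hwalk : ∀ m j : V, (((d : ℝ)⁻¹ • G.adjMatrix ℝ) ^ (2 * k)) m j
        ≤ C / Fintype.card V) :
    (⨆ v, |φ v|)
      ≤ ((d : ℝ) / ((d : ℝ) - ε)) ^ (2 * k)
          * (C / Real.sqrt (Fintype.card V)) * Real.sqrt (∑ v, φ v ^ 2) := by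
  have hd : (0:ℝ) < d := lt_of_le_of_lt hε0 hεd
  have hn : (0:ℝ) < Fintype.card V := by exact_mod_cast Fintype.card_pos
  set N : Matrix V V ℝ := (d:ℝ)⁻¹ • G.adjMatrix ℝ with hN
  have hNnn : ∀ i j, 0 ≤ N i j := by
    intro i j
    simp only [hN, Matrix.smul_apply, smul_eq_mul]
    have h0 : (0:ℝ) ≤ G.adjMatrix ℝ i j := by
      rw [SimpleGraph.adjMatrix_apply]; split <;> norm_num
    positivity
  have hMnn : ∀ p : ℕ, ∀ i j, 0 ≤ (N ^ p) i j := by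
    intro p
    induction p with
    | zero => intro i j; rw [pow_zero, Matrix.one_apply]; split <;> norm_num
    | succ p ih =>
      intro i j
      rw [pow_succ, Matrix.mul_apply]
      exact Finset.sum_nonneg fun x _ => mul_nonneg (ih i x) (hNnn x j)
  have hA : G.adjMatrix ℝ *ᵥ φ = (ε - (d:ℝ)) • φ := by
    rw [Matrix.add_mulVec, Matrix.smul_mulVec, Matrix.one_mulVec] at heig
    have h : G.adjMatrix ℝ *ᵥ φ = ε • φ - (d:ℝ) • φ := by
      rw [eq_sub_iff_add_eq, add_comm]; exact heig
    rw [h, sub_smul]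
  have hNφ : N *ᵥ φ = ((ε - (d:ℝ)) / d) • φ := by
    rw [hN, Matrix.smul_mulVec, hA, smul_smul, div_eq_inv_mul]
  have hpow : ∀ p : ℕ, (N ^ p) *ᵥ φ = (((ε - (d:ℝ)) / d) ^ p) • φ := by
    intro p
    induction p with
    | zero => simp
    | succ p ih =>
      rw [pow_succ, ← Matrix.mulVec_mulVec, hNφ, Matrix.mulVec_smul, ih,
        smul_smul, pow_succ, mul_comm]
  have heven : ((ε - (d:ℝ)) / d) ^ (2 * k) = (((d:ℝ) - ε) / d) ^ (2 * k) := by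
    have h : (ε - (d:ℝ)) / d = -((((d:ℝ) - ε)) / d) := by ring
    rw [h, Even.neg_pow ⟨k, by ring⟩]
  have hrpos : (0:ℝ) < (((d:ℝ) - ε) / d) ^ (2 * k) :=
    pow_pos (div_pos (by linarith) hd) _
  have hkey : ∀ v, (((d:ℝ) - ε) / d) ^ (2 * k) * φ v = ((N ^ (2 * k)) *ᵥ φ) v := by
    intro v
    rw [hpow, heven, Pi.smul_apply, smul_eq_mul]
  -- Cauchy-Schwarz bound on each entry of N^(2k) *ᵥ φ
  have hbound : ∀ v, |((N ^ (2 * k)) *ᵥ φ) v|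
      ≤ (C / Real.sqrt (Fintype.card V)) * Real.sqrt (∑ w, φ w ^ 2) := by
    intro v
    have hCS : (∑ j, (N ^ (2 * k)) v j * φ j) ^ 2
        ≤ (∑ j, ((N ^ (2 * k)) v j) ^ 2) * (∑ j, φ j ^ 2) :=
      Finset.sum_mul_sq_le_sq_mul_sq _ _ _
    have hrow : (∑ j, ((N ^ (2 * k)) v j) ^ 2)
        ≤ (Fintype.card V : ℝ) * (C / Fintype.card V) ^ 2 := by
      calc (∑ j, ((N ^ (2 * k)) v j) ^ 2)
          ≤ ∑ _j : V, (C / Fintype.card V) ^ 2 := by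
            apply Finset.sum_le_sum
            intro j _
            exact pow_le_pow_left₀ (hMnn _ v j) (hwalk v j) 2
        _ = (Fintype.card V : ℝ) * (C / Fintype.card V) ^ 2 := by
            rw [Finset.sum_const, Finset.card_univ, nsmul_eq_mul]
    have hrow' : (Fintype.card V : ℝ) * (C / Fintype.card V) ^ 2
        = (C / Real.sqrt (Fintype.card V)) ^ 2 := by
      rw [div_pow, div_pow, Real.sq_sqrt hn.le]
      field_simp
    have habs : |((N ^ (2 * k)) *ᵥ φ) v| = |∑ j, (N ^ (2 * k)) v j * φ j| := by
      rw [Matrix.mulVec, dotProduct]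
    rw [habs]
    have hsq : (∑ j, (N ^ (2 * k)) v j * φ j) ^ 2
        ≤ ((C / Real.sqrt (Fintype.card V)) * Real.sqrt (∑ w, φ w ^ 2)) ^ 2 := by
      rw [mul_pow, Real.sq_sqrt (Finset.sum_nonneg fun w _ => sq_nonneg _)]
      calc (∑ j, (N ^ (2 * k)) v j * φ j) ^ 2
          ≤ (∑ j, ((N ^ (2 * k)) v j) ^ 2) * (∑ j, φ j ^ 2) := hCS
        _ ≤ (C / Real.sqrt (Fintype.card V)) ^ 2 * (∑ j, φ j ^ 2) := by
            apply mul_le_mul_of_nonneg_right _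
              (Finset.sum_nonneg fun w _ => sq_nonneg _)
            rw [← hrow']; exact hrow
    have hRHSnn : 0 ≤ (C / Real.sqrt (Fintype.card V)) * Real.sqrt (∑ w, φ w ^ 2) :=
      mul_nonneg (div_nonneg hC.le (Real.sqrt_nonneg _)) (Real.sqrt_nonneg _)
    exact abs_le.mpr (abs_le_of_sq_le_sq' hsq hRHSnn)
  -- per-vertex bound
  have hvertex : ∀ v, |φ v|
      ≤ ((d : ℝ) / ((d : ℝ) - ε)) ^ (2 * k)
          * (C / Real.sqrt (Fintype.card V)) * Real.sqrt (∑ w, φ w ^ 2) := by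
    intro v
    have h1 : |φ v| = ((d : ℝ) / ((d : ℝ) - ε)) ^ (2 * k)
        * |((N ^ (2 * k)) *ᵥ φ) v| := by
      rw [← hkey v, abs_mul, abs_of_pos hrpos, ← mul_assoc, ← mul_pow]
      have : (d:ℝ) / ((d:ℝ) - ε) * (((d:ℝ) - ε) / d) = 1 := by
        have h1 : (d:ℝ) - ε ≠ 0 := by linarith
        field_simp
      rw [this, one_pow, one_mul]
    rw [h1, mul_assoc]
    apply mul_le_mul_of_nonneg_left (hbound v)
    exact pow_nonneg (div_nonneg hd.le (by linarith)) _
  exact ciSup_le hvertex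
end
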